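/- Let K, n be positive integers, and for k = 1,…,K let M_k be an n×m_k complex matrix. Set A_k := M_k M_k*. Then for scalars x_1,…,x_K, det(x_1 A_1 + ⋯ + x_K A_K) = Σ_{n_1+⋯+n_K = n} γ(n_1,…,n_K) x_1^{n_1} ⋯ x_K^{n_K}, where γ(n_1,…,n_K) = Σ |det(S_1 | ⋯ | S_K)|², the sum ranging over all ordered K-tuples (S_1,…,S_K) where S_k is an n×n_k submatrix formed from a choice of n_k distinct columns of M_k. -/

import Mathlib

open scoped BigOperators
open Matrix Finset

theorem cauchyBinetAux {R : Type*} [CommRing R] {n : ℕ} {J : Type*} [Fintype J] [DecidableEq J]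
    (B C : Matrix (Fin n) J R)
    (e : ∀ S : Finset J, S.card = n → (Fin n ≃ {t // t ∈ S})) :
    (B * Cᵀ).det = ∑ S : Finset J, (if h : S.card = n then
      (B.submatrix id (fun a => (e S h a : J))).det *
      (C.submatrix id (fun a => (e S h a : J))).det else 0) := by
  classical
  set F : (Fin n → J) → R := fun p => (∏ i, C i (p i)) * (B.submatrix id p).det with hF
  have stepA : (B * Cᵀ).det = ∑ p : Fin n → J, F p := by
    calc (B * Cᵀ).det
        = ∑ σ : Equiv.Perm (Fin n), ((Equiv.Perm.sign σ : ℤ) : R) * ∏ i, ∑ j, B (σ i) j * C i j := by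
          rw [det_apply']
          simp only [Matrix.mul_apply, Matrix.transpose_apply]
      _ = ∑ σ : Equiv.Perm (Fin n), ∑ p ∈ Fintype.piFinset (fun _ : Fin n => (univ : Finset J)),
            ((Equiv.Perm.sign σ : ℤ) : R) * ∏ i, (B (σ i) (p i) * C i (p i)) := by
          simp_rw [Finset.prod_univ_sum, Finset.mul_sum]
      _ = ∑ p : Fin n → J, ∑ σ : Equiv.Perm (Fin n),
            ((Equiv.Perm.sign σ : ℤ) : R) * ∏ i, (B (σ i) (p i) * C i (p i)) := by
          rw [Finset.sum_comm]
          simp [Fintype.piFinset_univ]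
      _ = ∑ p : Fin n → J, F p := by
          apply Finset.sum_congr rfl; intro p _
          rw [hF]
          simp only
          rw [det_apply', Finset.mul_sum]
          apply Finset.sum_congr rfl; intro σ _
          simp only [Matrix.submatrix_apply, id_eq, Finset.prod_mul_distrib]
          ring
  -- non-injective terms vanish
  have hzero : ∀ p : Fin n → J, ¬ Function.Injective p → F p = 0 := by
    intro p hp
    obtain ⟨a, b, hab, hne⟩ := Function.not_injective_iff.1 hp
    have : (B.submatrix id p).det = 0 :=
      Matrix.det_zero_of_column_eq hne (fun k => by simp [Matrix.submatrix_apply, hab])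
    rw [hF]; simp only; rw [this, mul_zero]
  have hsplit : ∑ p : Fin n → J, F p
      = ∑ p ∈ univ.filter (fun p : Fin n → J => Function.Injective p), F p :=
    (Finset.sum_subset (Finset.filter_subset _ _)
      (fun p _ hp => hzero p (by simpa using hp))).symm
  -- per-S computation
  have inner : ∀ (S : Finset J) (h : S.card = n),
      (B.submatrix id (fun a => (e S h a : J))).det *
        (C.submatrix id (fun a => (e S h a : J))).det
      = ∑ σ : Equiv.Perm (Fin n), F (fun a => (e S h (σ a) : J)) := by
    intro S h
    have key : ∀ σ : Equiv.Perm (Fin n),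
        (B.submatrix id (fun a => ((e S h) (σ a) : J))).det
        = ((Equiv.Perm.sign σ : ℤ) : R) * (B.submatrix id (fun a => (e S h a : J))).det := by
      intro σ
      have h2 : (B.submatrix id (fun a => ((e S h) (σ a) : J)))
          = (B.submatrix id (fun a => ((e S h) a : J))).submatrix id σ := rfl
      rw [h2, Matrix.det_permute']
    have h3 : ∑ σ : Equiv.Perm (Fin n), F (fun a => (e S h (σ a) : J))
        = (B.submatrix id (fun a => (e S h a : J))).det *
          ∑ σ : Equiv.Perm (Fin n), ((Equiv.Perm.sign σ : ℤ) : R) * ∏ i, C i (e S h (σ i)) := by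
      rw [Finset.mul_sum]
      apply Finset.sum_congr rfl; intro σ _
      rw [hF]; simp only; rw [key]; ring
    rw [h3]
    congr 1
    rw [← Matrix.det_transpose (C.submatrix id (fun a => (e S h a : J))), det_apply']
    rfl
  rw [stepA, hsplit]
  -- rewrite the RHS as a sum over the attached filter
  have hdite : ∀ S : Finset J, (if h : S.card = n then
        (B.submatrix id (fun a => (e S h a : J))).det *
        (C.submatrix id (fun a => (e S h a : J))).det else 0)
      = (if h : S.card = n then
        (B.submatrix id (fun a => (e S h a : J))).det *
        (C.submatrix id (fun a => (e S h a : J))).det else 0) := fun _ => rfl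
  rw [show (∑ S : Finset J, (if h : S.card = n then
        (B.submatrix id (fun a => (e S h a : J))).det *
        (C.submatrix id (fun a => (e S h a : J))).det else 0))
      = ∑ S ∈ univ.filter (fun S : Finset J => S.card = n), (if h : S.card = n then
        (B.submatrix id (fun a => (e S h a : J))).det *
        (C.submatrix id (fun a => (e S h a : J))).det else 0) from
    (Finset.sum_subset (Finset.filter_subset _ _)
      (fun S _ hS => dif_neg (by simpa using hS))).symm]
  rw [← Finset.sum_attach (univ.filter (fun S : Finset J => S.card = n))
      (fun S => (if h : S.card = n then
        (B.submatrix id (fun a => (e S h a : J))).det *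
        (C.submatrix id (fun a => (e S h a : J))).det else 0))]
  have hcard : ∀ x : {S // S ∈ univ.filter (fun S : Finset J => S.card = n)}, x.1.card = n :=
    fun x => (Finset.mem_filter.1 x.2).2
  rw [show (∑ x ∈ (univ.filter (fun S : Finset J => S.card = n)).attach,
        (if h : x.1.card = n then
        (B.submatrix id (fun a => (e x.1 h a : J))).det *
        (C.submatrix id (fun a => (e x.1 h a : J))).det else 0))
      = ∑ x ∈ (univ.filter (fun S : Finset J => S.card = n)).attach,
          ∑ σ : Equiv.Perm (Fin n), F (fun a => (e x.1 (hcard x) (σ a) : J)) from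
    Finset.sum_congr rfl (fun x _ => by rw [dif_pos (hcard x), inner x.1 (hcard x)])]
  rw [← Finset.sum_product']
  symm
  apply Finset.sum_bij (i := fun (y : {S // S ∈ univ.filter (fun S : Finset J => S.card = n)}
      × Equiv.Perm (Fin n)) (_ : y ∈ _) => (fun a => (e y.1.1 (hcard y.1) (y.2 a) : J)))
  · -- maps into the injective filter
    intro y _
    simp only [Finset.mem_filter, Finset.mem_univ, true_and]
    intro a b hab
    exact y.2.injective ((e y.1.1 (hcard y.1)).injective (Subtype.coe_injective hab))
  · -- injectivity
    intro y₁ h₁ y₂ h₂ hmap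
    have hSS : y₁.1.1 = y₂.1.1 := by
      apply Finset.Subset.antisymm
      · intro t ht
        have : (fun a => (e y₁.1.1 (hcard y₁.1) (y₁.2 a) : J))
            (y₁.2.symm ((e y₁.1.1 (hcard y₁.1)).symm ⟨t, ht⟩)) = t := by simp
        rw [hmap] at this
        rw [← this]
        exact ((e y₂.1.1 (hcard y₂.1)) _).2
      · intro t ht
        have : (fun a => (e y₂.1.1 (hcard y₂.1) (y₂.2 a) : J))
            (y₂.2.symm ((e y₂.1.1 (hcard y₂.1)).symm ⟨t, ht⟩)) = t := by simp
        rw [← hmap] at this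
        rw [← this]
        exact ((e y₁.1.1 (hcard y₁.1)) _).2
    have hS : y₁.1 = y₂.1 := Subtype.ext hSS
    obtain ⟨⟨S₁, hS₁⟩, σ₁⟩ := y₁
    obtain ⟨⟨S₂, hS₂⟩, σ₂⟩ := y₂
    simp only at hSS
    subst hSS
    have hσ : σ₁ = σ₂ := by
      apply Equiv.ext; intro a
      have := congrFun hmap a
      simp only at this
      exact (e S₁ (hcard ⟨S₁, hS₁⟩)).injective (Subtype.coe_injective this)
    rw [hσ]
  · -- surjectivity
    intro p hp
    have hpinj : Function.Injective p := by simpa using hp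
    have hMS : (univ.image p).card = n := by
      rw [Finset.card_image_of_injective _ hpinj, Finset.card_univ, Fintype.card_fin]
    set S : Finset J := univ.image p with hSdef
    have hmemS : ∀ a, p a ∈ S := fun a => Finset.mem_image_of_mem p (Finset.mem_univ a)
    have hx : S ∈ univ.filter (fun S : Finset J => S.card = n) := by
      simp [Finset.mem_filter, hMS]
    set σ₀ : Fin n → Fin n := fun a => (e S hMS).symm ⟨p a, hmemS a⟩ with hσ₀
    have hσ₀inj : Function.Injective σ₀ := by
      intro a b hab
      apply hpinj
      have := (e S hMS).symm.injective hab
      exact Subtype.ext_iff.1 this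
    refine ⟨⟨⟨S, hx⟩, Equiv.ofBijective σ₀ (Finite.injective_iff_bijective.1 hσ₀inj)⟩,
      Finset.mem_product.2 ⟨Finset.mem_attach _ _, Finset.mem_univ _⟩, ?_⟩
    funext a
    simp only [Equiv.ofBijective_apply, hσ₀]
    rw [show e (⟨S, hx⟩ : {S // S ∈ univ.filter (fun S : Finset J => S.card = n)}).1
        (hcard ⟨S, hx⟩) ((e S hMS).symm ⟨p a, hmemS a⟩)
        = e S hMS ((e S hMS).symm ⟨p a, hmemS a⟩) from rfl]
    rw [Equiv.apply_symm_apply]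
  · -- values agree
    intro y _
    rfl

theorem absDetAux {n : ℕ} {J : Type*} (C : Matrix (Fin n) J ℂ)
    (u v : Fin n → J) (π : Equiv.Perm (Fin n)) (h : ∀ a, u a = v (π a)) :
    ‖(C.submatrix id u).det‖ = ‖(C.submatrix id v).det‖ := by
  have h2 : C.submatrix id u = (C.submatrix id v).submatrix id π := by
    ext i a; simp [h]
  rw [h2, Matrix.det_permute']
  rcases Int.units_eq_one_or (Equiv.Perm.sign π) with hs | hs <;> simp [hs]

set_option maxHeartbeats 1000000 in
theorem stmt3 (K n : ℕ) (hK : 0 < K) (hn : 0 < n) (m : Fin K → ℕ)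
    (M : ∀ k : Fin K, Matrix (Fin n) (Fin (m k)) ℂ) (x : Fin K → ℂ) :
    (∑ k, x k • (M k * (M k)ᴴ)).det =
      ∑ s ∈ Finset.univ.filter
        (fun s : ∀ k : Fin K, Finset (Fin (m k)) => ∑ k, (s k).card = n),
        (if h : Fintype.card ((k : Fin K) × {j // j ∈ s k}) = n then
          ((‖
            (Matrix.det (Matrix.of fun i j =>
              M (((Fintype.equivFinOfCardEq h).symm j).1) i
                (((Fintype.equivFinOfCardEq h).symm j).2.1)))‖) ^ 2 : ℂ)
         else 0) * ∏ k, x k ^ (s k).card := by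
  classical
  set C : Matrix (Fin n) ((k : Fin K) × Fin (m k)) ℂ :=
    Matrix.of (fun i t => M t.1 i t.2) with hC
  set B : Matrix (Fin n) ((k : Fin K) × Fin (m k)) ℂ :=
    Matrix.of (fun i t => x t.1 * M t.1 i t.2) with hB
  have hprod : (∑ k, x k • (M k * (M k)ᴴ)) = B * ((C.map (starRingEnd ℂ)))ᵀ := by
    ext i i'
    simp only [Matrix.sum_apply, Matrix.smul_apply, Matrix.mul_apply, Matrix.conjTranspose_apply,
      Matrix.map_apply, Matrix.transpose_apply, smul_eq_mul, hB, hC, Matrix.of_apply]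
    rw [← Finset.univ_sigma_univ, Finset.sum_sigma]
    apply Finset.sum_congr rfl; intro k _
    rw [Finset.mul_sum]
    apply Finset.sum_congr rfl; intro j _
    exact (mul_assoc _ _ _).symm
  set e : ∀ S : Finset ((k : Fin K) × Fin (m k)), S.card = n → (Fin n ≃ {t // t ∈ S}) :=
    fun S hS => (Fintype.equivFinOfCardEq (by rw [Fintype.card_coe]; exact hS)).symm with he
  rw [hprod, cauchyBinetAux B (C.map (starRingEnd ℂ)) e]
  rw [← Finset.sum_filter_add_sum_filter_not Finset.univ
    (fun S : Finset ((k : Fin K) × Fin (m k)) => S.card = n)]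
  rw [Finset.sum_eq_zero (fun S hS => dif_neg (Finset.mem_filter.1 hS).2), add_zero]
  symm
  apply Finset.sum_nbij' (i := fun s : ∀ k : Fin K, Finset (Fin (m k)) => Finset.univ.sigma s)
    (j := fun S (k : Fin K) => Finset.univ.filter
      (fun j : Fin (m k) => (⟨k, j⟩ : (k : Fin K) × Fin (m k)) ∈ S))
  · intro s hs
    simp only [Finset.mem_filter, Finset.mem_univ, true_and] at hs ⊢
    rw [Finset.card_sigma]; exact hs
  · intro S hS
    simp only [Finset.mem_filter, Finset.mem_univ, true_and] at hS ⊢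
    have hrec : Finset.univ.sigma (fun k : Fin K => Finset.univ.filter
        (fun j : Fin (m k) => (⟨k, j⟩ : (k : Fin K) × Fin (m k)) ∈ S)) = S := by
      ext t; cases t; simp [Finset.mem_sigma]
    rw [← Finset.card_sigma, hrec]; exact hS
  · intro s _; funext k; ext j; simp [Finset.mem_sigma]
  · intro S _; ext t; cases t; simp [Finset.mem_sigma]
  · -- term equality
    intro s hs
    have hs' : ∑ k, (s k).card = n := (Finset.mem_filter.1 hs).2
    have hS : (Finset.univ.sigma s).card = n := by rw [Finset.card_sigma]; exact hs'
    have hcardsig : Fintype.card ((k : Fin K) × {j // j ∈ s k}) = n := by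
      rw [Fintype.card_sigma]
      simp only [Fintype.card_coe]
      exact hs'
    rw [dif_pos hcardsig, dif_pos hS]
    set w : Fin n → (k : Fin K) × Fin (m k) :=
      fun a => (e (Finset.univ.sigma s) hS a : (k : Fin K) × Fin (m k)) with hw
    set φ : Fin n ≃ ((k : Fin K) × {j // j ∈ s k}) := (Fintype.equivFinOfCardEq hcardsig).symm
      with hφ
    set u : Fin n → (k : Fin K) × Fin (m k) := fun a => ⟨(φ a).1, (φ a).2.1⟩ with hu
    -- rewrite B-submatrix determinant
    have hBw : (B.submatrix id w)
        = Matrix.of (fun i a => x ((w a).1) * (C.submatrix id w) i a) := rfl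
    have hCstw : (C.map (starRingEnd ℂ)).submatrix id w
        = ((C.submatrix id w)ᴴ)ᵀ := rfl
    rw [hBw, Matrix.det_mul_row, hCstw, Matrix.det_transpose, Matrix.det_conjTranspose,
      mul_assoc,
      show (star (C.submatrix id w).det) = (starRingEnd ℂ) (C.submatrix id w).det from rfl,
      Complex.mul_conj]
    -- the product of x's
    have hP : (∏ a : Fin n, x ((w a).1)) = ∏ k, x k ^ (s k).card := by
      rw [hw]
      rw [Equiv.prod_comp (e (Finset.univ.sigma s) hS)
        (fun t : {t // t ∈ Finset.univ.sigma s} => x ((t : (k : Fin K) × Fin (m k)).1))]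
      rw [Finset.prod_coe_sort (Finset.univ.sigma s) (fun t => x t.1)]
      rw [Finset.prod_sigma]
      simp
    -- absolute values agree
    let hrho : ((k : Fin K) × {j // j ∈ s k}) ≃ {t // t ∈ Finset.univ.sigma s} :=
      { toFun := fun t => ⟨⟨t.1, t.2.1⟩, by simp [Finset.mem_sigma, t.2.2]⟩
        invFun := fun t => ⟨(t : (k : Fin K) × Fin (m k)).1,
          ⟨(t : (k : Fin K) × Fin (m k)).2, by
            have := t.2; rw [Finset.mem_sigma] at this; exact this.2⟩⟩
        left_inv := fun ⟨k, ⟨j, hj⟩⟩ => rfl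
        right_inv := fun ⟨⟨k, j⟩, ht⟩ => rfl }
    have habs : ‖(C.submatrix id u).det‖ = ‖(C.submatrix id w).det‖ := by
      apply absDetAux C u w (φ.trans (hrho.trans (e (Finset.univ.sigma s) hS).symm))
      intro a
      simp only [hu, hw, Equiv.trans_apply, Equiv.apply_symm_apply]
      rfl
    have hU : (Matrix.of fun i j =>
        M (((Fintype.equivFinOfCardEq hcardsig).symm j).1) i
          (((Fintype.equivFinOfCardEq hcardsig).symm j).2.1)) = C.submatrix id u := rfl
    rw [hU, habs, hP]
    rw [← Complex.sq_norm]
    push_cast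
    ring
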